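/- Let G be a large scale group that has a basis (G_i)_{i≥1} of unbounded boundedly generated subgroups: each G_i is unbounded, each G_i is generated by a bounded subset of G, and every bounded subset of G is contained in some G_i. Regard each G_i as a large scale group whose bounded sets are the bounded subsets of G contained in G_i. Let m be a natural number. If each G_i has at most m ends, then G has at most m ends. -/

import Mathlib

open Set Pointwise

/-- A subset `A` is coarsely clopen relative to a bornology `ℬ` on a group `G`
if `(A·B) ∩ (Aᶜ·B)` is bounded for every bounded `B`. -/
def CoarselyClopen {G : Type*} [Group G] (ℬ : Set (Set G)) (A : Set G) : Prop :=
  ∀ B ∈ ℬ, (A * B) ∩ (Aᶜ * B) ∈ ℬ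

/-- A family of unbounded coarsely clopen sets, all of whose finite intersections
are unbounded. -/
def IsGoodFamily {G : Type*} [Group G] (ℬ : Set (Set G)) (E : Set (Set G)) : Prop :=
  (∀ A ∈ E, A ∉ ℬ ∧ CoarselyClopen ℬ A) ∧
    (∀ F : Finset (Set G), F.Nonempty → (F : Set (Set G)) ⊆ E →
      ⋂₀ (F : Set (Set G)) ∉ ℬ)

/-- An end of a group with a bornology: a maximal family of unbounded coarsely clopen
sets with all finite intersections unbounded. -/
def IsEnd {G : Type*} [Group G] (ℬ : Set (Set G)) (E : Set (Set G)) : Prop :=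
  IsGoodFamily ℬ E ∧ ∀ E' : Set (Set G), IsGoodFamily ℬ E' → E ⊆ E' → E' = E

/-- The set of ends of a group with a bornology. -/
def Ends {G : Type*} [Group G] (ℬ : Set (Set G)) : Set (Set (Set G)) :=
  {E | IsEnd ℬ E}

/-- The bornology induced on a subgroup: a subset of the subgroup is bounded iff
its image in the ambient group is bounded. -/
def inducedBornology {G : Type*} [Group G] (ℬ : Set (Set G)) (H : Subgroup G) :
    Set (Set H) :=
  {S : Set H | (Subtype.val '' S : Set G) ∈ ℬ}

section Aux

variable {G : Type*} [Group G] {ℬ : Set (Set G)}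

lemma born_empty (hsingle : ∀ g : G, {g} ∈ ℬ)
    (hsubset : ∀ S T : Set G, S ⊆ T → T ∈ ℬ → S ∈ ℬ) : (∅ : Set G) ∈ ℬ :=
  hsubset ∅ {1} (empty_subset _) (hsingle 1)

lemma cc_compl {A : Set G} (h : CoarselyClopen ℬ A) : CoarselyClopen ℬ Aᶜ := by
  intro B hB
  have := h B hB
  rw [compl_compl]
  rwa [inter_comm]

lemma cc_inter (hsubset : ∀ S T : Set G, S ⊆ T → T ∈ ℬ → S ∈ ℬ)
    (hunion : ∀ S ∈ ℬ, ∀ T ∈ ℬ, S ∪ T ∈ ℬ)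
    {A B : Set G} (hA : CoarselyClopen ℬ A) (hB : CoarselyClopen ℬ B) :
    CoarselyClopen ℬ (A ∩ B) := by
  intro C hC
  apply hsubset _ _ _ (hunion _ (hA C hC) _ (hB C hC))
  rintro x ⟨hx1, hx2⟩
  obtain ⟨p, hp, c, hc, rfl⟩ := hx1
  obtain ⟨q, hq, c', hc', hxe⟩ := hx2
  rcases not_and_or.mp hq with hq' | hq'
  · exact Or.inl ⟨⟨p, hp.1, c, hc, rfl⟩, ⟨q, hq', c', hc', hxe⟩⟩
  · exact Or.inr ⟨⟨p, hp.2, c, hc, rfl⟩, ⟨q, hq', c', hc', hxe⟩⟩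

lemma cc_univ (hsingle : ∀ g : G, {g} ∈ ℬ)
    (hsubset : ∀ S T : Set G, S ⊆ T → T ∈ ℬ → S ∈ ℬ) :
    CoarselyClopen ℬ (univ : Set G) := by
  intro B hB
  rw [compl_univ, Set.empty_mul, inter_empty]
  exact born_empty hsingle hsubset

lemma cc_sInterFinset (hsingle : ∀ g : G, {g} ∈ ℬ)
    (hsubset : ∀ S T : Set G, S ⊆ T → T ∈ ℬ → S ∈ ℬ)
    (hunion : ∀ S ∈ ℬ, ∀ T ∈ ℬ, S ∪ T ∈ ℬ)
    (F : Finset (Set G)) (h : ∀ A ∈ F, CoarselyClopen ℬ A) :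
    CoarselyClopen ℬ (⋂₀ (F : Set (Set G))) := by
  classical
  induction F using Finset.induction with
  | empty => simpa using cc_univ hsingle hsubset
  | insert _ _ hA ih =>
    rw [Finset.coe_insert, sInter_insert]
    exact cc_inter hsubset hunion (h _ (Finset.mem_insert_self _ _))
      (ih fun A hA => h A (Finset.mem_insert_of_mem hA))

lemma exists_end_extending (E : Set (Set G)) (hE : IsGoodFamily ℬ E) :
    ∃ E', IsEnd ℬ E' ∧ E ⊆ E' := by
  classical
  have hchainub : ∀ c ⊆ {E' | IsGoodFamily ℬ E'}, IsChain (· ⊆ ·) c → c.Nonempty →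
      ∃ ub ∈ {E' | IsGoodFamily ℬ E'}, ∀ s ∈ c, s ⊆ ub := by
    intro c hcS hchain hcne
    refine ⟨⋃₀ c, ⟨?_, ?_⟩, fun s hs => subset_sUnion_of_mem hs⟩
    · rintro A ⟨s, hs, hAs⟩
      exact (hcS hs).1 A hAs
    · intro F hFne hFsub
      have hex : ∃ s ∈ c, (F : Set (Set G)) ⊆ s := by
        clear hFne
        induction F using Finset.induction with
        | empty =>
          obtain ⟨s, hs⟩ := hcne
          exact ⟨s, hs, by simp⟩
        | insert _ _ hA ih =>
          rename_i X F' _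
          obtain ⟨s₁, hs₁, hFs₁⟩ := ih (fun x hx => hFsub (Finset.mem_coe.mpr (Finset.mem_insert_of_mem (Finset.mem_coe.mp hx))))
          obtain ⟨s₂, hs₂, hXs₂⟩ := hFsub (Finset.mem_coe.mpr (Finset.mem_insert_self _ _))
          rcases hchain.total hs₁ hs₂ with hle | hle
          · refine ⟨s₂, hs₂, ?_⟩
            rw [Finset.coe_insert]
            exact insert_subset hXs₂ (hFs₁.trans hle)
          · refine ⟨s₁, hs₁, ?_⟩
            rw [Finset.coe_insert]
            exact insert_subset (hle hXs₂) hFs₁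
      obtain ⟨s, hs, hFs⟩ := hex
      exact (hcS hs).2 F hFne hFs
  obtain ⟨M, hEM, hMax⟩ := zorn_subset_nonempty {E' | IsGoodFamily ℬ E'} hchainub E hE
  exact ⟨M, ⟨hMax.prop, fun E' hE' hME' => subset_antisymm (hMax.2 hE' hME') hME'⟩, hEM⟩

end Aux
section Aux2

variable {G : Type*} [Group G] {ℬ : Set (Set G)}

lemma compl_mem_end
    (hsubset : ∀ S T : Set G, S ⊆ T → T ∈ ℬ → S ∈ ℬ)
    (hunion : ∀ S ∈ ℬ, ∀ T ∈ ℬ, S ∪ T ∈ ℬ)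
    {E : Set (Set G)} (hE : IsEnd ℬ E) {A : Set G}
    (hcc : CoarselyClopen ℬ A) (hAu : A ∉ ℬ) (hA : A ∉ E) : Aᶜ ∈ E := by
  classical
  -- E ∪ {A} is not a good family
  have hng : ¬ IsGoodFamily ℬ (E ∪ {A}) := by
    intro hg
    have := hE.2 (E ∪ {A}) hg subset_union_left
    exact hA (this ▸ (Or.inr rfl : A ∈ E ∪ {A}))
  have hcond1 : ∀ X ∈ E ∪ {A}, X ∉ ℬ ∧ CoarselyClopen ℬ X := by
    rintro X (hX | hX)
    · exact hE.1.1 X hX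
    · rw [mem_singleton_iff] at hX; subst hX; exact ⟨hAu, hcc⟩
  have hcond2 : ∃ F : Finset (Set G), F.Nonempty ∧ (F : Set (Set G)) ⊆ E ∪ {A} ∧
      ⋂₀ (F : Set (Set G)) ∈ ℬ := by
    by_contra hc
    push_neg at hc
    exact hng ⟨hcond1, fun F hFne hFsub => hc F hFne hFsub⟩
  obtain ⟨F, hFne, hFsub, hFb⟩ := hcond2
  have hAF : A ∈ F := by
    by_contra hAF
    have : (F : Set (Set G)) ⊆ E := by
      intro X hX
      rcases hFsub hX with h | h
      · exact h
      · rw [mem_singleton_iff] at h; subst h; exact absurd hX hAF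
    exact hE.1.2 F hFne this hFb
  set F' : Finset (Set G) := F.erase A with hF'def
  have hF'sub : (F' : Set (Set G)) ⊆ E := by
    intro X hX
    have hXF := Finset.mem_coe.mp hX
    have hne := Finset.ne_of_mem_erase hXF
    rcases hFsub (Finset.mem_coe.mpr (Finset.mem_of_mem_erase hXF)) with h | h
    · exact h
    · rw [mem_singleton_iff] at h; exact absurd h hne
  set T : Set G := ⋂₀ (F' : Set (Set G)) with hTdef
  have hinter : A ∩ T ∈ ℬ := by
    have : (F : Set (Set G)) = insert A (F' : Set (Set G)) := by
      rw [← Finset.coe_insert, Finset.insert_erase hAF]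
    rwa [this, sInter_insert] at hFb
  -- F' is nonempty
  have hF'ne : F'.Nonempty := by
    rcases Finset.eq_empty_or_nonempty F' with h | h
    · exfalso
      apply hAu
      have : T = univ := by rw [hTdef, h]; simp
      rw [this, inter_univ] at hinter
      exact hinter
    · exact h
  have hTu : T ∉ ℬ := hE.1.2 F' hF'ne hF'sub
  have hAcTu : Aᶜ ∩ T ∉ ℬ := by
    intro h
    apply hTu
    apply hsubset _ _ _ (hunion _ hinter _ h)
    intro x hx
    by_cases hxA : x ∈ A
    · exact Or.inl ⟨hxA, hx⟩
    · exact Or.inr ⟨hxA, hx⟩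
  have hAcu : Aᶜ ∉ ℬ := fun h => hAcTu (hsubset _ _ inter_subset_left h)
  -- E ∪ {Aᶜ} is a good family
  have hgood : IsGoodFamily ℬ (E ∪ {Aᶜ}) := by
    constructor
    · rintro X (hX | hX)
      · exact hE.1.1 X hX
      · rw [mem_singleton_iff] at hX; subst hX
        exact ⟨hAcu, cc_compl hcc⟩
    · intro F₂ hF₂ne hF₂sub
      by_cases hAcF₂ : Aᶜ ∈ F₂
      · set F₂' : Finset (Set G) := F₂.erase Aᶜ with hF₂'def
        have hF₂'sub : (F₂' : Set (Set G)) ⊆ E := by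
          intro X hX
          have hXF := Finset.mem_coe.mp hX
          have hne := Finset.ne_of_mem_erase hXF
          rcases hF₂sub (Finset.mem_coe.mpr (Finset.mem_of_mem_erase hXF)) with h | h
          · exact h
          · rw [mem_singleton_iff] at h; exact absurd h hne
        have hsplit : (F₂ : Set (Set G)) = insert Aᶜ (F₂' : Set (Set G)) := by
          rw [← Finset.coe_insert, Finset.insert_erase hAcF₂]
        rw [hsplit, sInter_insert]
        set T₂ : Set G := ⋂₀ (F₂' : Set (Set G)) with hT₂def
        have hT₂T : T₂ ∩ T ∉ ℬ := by
          have hcoe : ((F₂' ∪ F') : Finset (Set G)) = (F₂' : Set (Set G)) ∪ (F' : Set (Set G)) :=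
            Finset.coe_union _ _
          have h3ne : (F₂' ∪ F').Nonempty := Finset.Nonempty.mono Finset.subset_union_right hF'ne
          have h3sub : ((F₂' ∪ F') : Finset (Set G)) → True := fun _ => trivial
          have h3sub' : ((F₂' ∪ F' : Finset (Set G)) : Set (Set G)) ⊆ E :=
            hcoe ▸ union_subset hF₂'sub hF'sub
          have := hE.1.2 (F₂' ∪ F') h3ne h3sub'
          rwa [hcoe, sInter_union] at this
        intro h
        apply hT₂T
        apply hsubset _ _ _ (hunion _ hinter _ h)
        rintro x ⟨hx2, hxT⟩
        by_cases hxA : x ∈ A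
        · exact Or.inl ⟨hxA, hxT⟩
        · exact Or.inr ⟨hxA, hx2⟩
      · have : (F₂ : Set (Set G)) ⊆ E := by
          intro X hX
          rcases hF₂sub hX with h | h
          · exact h
          · rw [mem_singleton_iff] at h; subst h
            exact absurd (Finset.mem_coe.mp hX) hAcF₂
        exact hE.1.2 F₂ hF₂ne this
  have := hE.2 (E ∪ {Aᶜ}) hgood subset_union_left
  exact this ▸ (Or.inr rfl : Aᶜ ∈ E ∪ {Aᶜ})

lemma sep_ends
    (hsubset : ∀ S T : Set G, S ⊆ T → T ∈ ℬ → S ∈ ℬ)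
    (hunion : ∀ S ∈ ℬ, ∀ T ∈ ℬ, S ∪ T ∈ ℬ)
    {E E' : Set (Set G)} (hE : IsEnd ℬ E) (hE' : IsEnd ℬ E') (hne : E ≠ E') :
    ∃ A, A ∈ E ∧ Aᶜ ∈ E' := by
  have hnsub : ¬ E ⊆ E' := fun h => hne (hE.2 E' hE'.1 h).symm
  obtain ⟨A, hAE, hAE'⟩ := not_subset.mp hnsub
  obtain ⟨hAu, hAcc⟩ := hE.1.1 A hAE
  exact ⟨A, hAE, compl_mem_end hsubset hunion hE' hAcc hAu hAE'⟩

end Aux2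
section Aux3

variable {G : Type*} [Group G] {ℬ : Set (Set G)}

lemma exists_trace_unbounded
    (hsingle : ∀ g : G, {g} ∈ ℬ)
    (hsubset : ∀ S T : Set G, S ⊆ T → T ∈ ℬ → S ∈ ℬ)
    (hunion : ∀ S ∈ ℬ, ∀ T ∈ ℬ, S ∪ T ∈ ℬ)
    (hmul : ∀ S ∈ ℬ, ∀ T ∈ ℬ, S * T ∈ ℬ)
    (hinv : ∀ S ∈ ℬ, S⁻¹ ∈ ℬ)
    (Gi : ℕ → Subgroup G)
    (hunb : ∀ i, ((Gi i : Subgroup G) : Set G) ∉ ℬ)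
    (hgen : ∀ i, ∃ B ∈ ℬ, Subgroup.closure B = Gi i)
    (hbasis : ∀ B ∈ ℬ, ∃ i, B ⊆ (Gi i : Set G))
    {A : Set G} (hcc : CoarselyClopen ℬ A) (hA : A ∉ ℬ) :
    ∃ k, A ∩ (Gi k : Set G) ∉ ℬ := by
  obtain ⟨B₀, hB₀ℬ, hB₀cl⟩ := hgen 0
  set S : Set G := B₀ ∪ {1} with hSdef
  have hSℬ : S ∈ ℬ := hunion _ hB₀ℬ _ (hsingle 1)
  set T : Set G := S ∪ S⁻¹ with hTdef
  have hTℬ : T ∈ ℬ := hunion _ hSℬ _ (hinv _ hSℬ)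
  have h1T : (1 : G) ∈ T := Or.inl (Or.inr rfl)
  have hB₀T : B₀ ⊆ T := fun x hx => Or.inl (Or.inl hx)
  -- every element of Gi 0 is a product of a list with entries in T
  have hmemT : ∀ g ∈ Gi 0, ∃ l : List G, (∀ y ∈ l, y ∈ T) ∧ l.prod = g := by
    intro g hg
    have h1 : g ∈ Subgroup.closure S := by
      have : g ∈ Subgroup.closure B₀ := by rw [hB₀cl]; exact hg
      exact Subgroup.closure_mono subset_union_left this
    have h2 : g ∈ Submonoid.closure (S ∪ S⁻¹) := by
      have := Subgroup.closure_toSubmonoid S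
      have hmem : g ∈ (Subgroup.closure S).toSubmonoid := h1
      rwa [this] at hmem
    exact Submonoid.exists_list_of_mem_closure h2
  have hD : (A * T) ∩ (Aᶜ * T) ∈ ℬ := hcc T hTℬ
  obtain ⟨k', hk'⟩ := hbasis _ (hunion _ hD _ hTℬ)
  have hTk' : T ⊆ (Gi k' : Set G) := fun x hx => hk' (Or.inr hx)
  have hDk' : (A * T) ∩ (Aᶜ * T) ⊆ (Gi k' : Set G) := fun x hx => hk' (Or.inl hx)
  by_cases hsub : A ⊆ (Gi k' : Set G)
  · exact ⟨k', by rwa [inter_eq_self_of_subset_left hsub]⟩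
  · obtain ⟨a, haA, hak'⟩ := not_subset.mp hsub
    have key : ∀ l : List G, (∀ y ∈ l, y ∈ T) → a * l.prod ∈ A := by
      intro l
      induction l using List.reverseRecOn with
      | nil => intro _; simpa using haA
      | append_singleton l s ih =>
        intro hl
        have hlT : ∀ y ∈ l, y ∈ T := fun y hy => hl y (List.mem_append_left _ hy)
        have hsT : s ∈ T := hl s (by simp)
        have hal : a * l.prod ∈ A := ih hlT
        rw [List.prod_append, List.prod_singleton, ← mul_assoc]
        by_contra hxc
        have hxD : a * l.prod * s ∈ (A * T) ∩ (Aᶜ * T) :=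
          ⟨⟨_, hal, s, hsT, rfl⟩, ⟨_, hxc, 1, h1T, mul_one _⟩⟩
        have hx : a * l.prod * s ∈ Gi k' := hDk' hxD
        have hlp : l.prod ∈ Gi k' := list_prod_mem fun y hy => hTk' (hlT y hy)
        have hs' : s ∈ Gi k' := hTk' hsT
        apply hak'
        have heq : a = a * l.prod * s * s⁻¹ * l.prod⁻¹ := by group
        rw [heq]
        exact mul_mem (mul_mem hx (inv_mem hs')) (inv_mem hlp)
    obtain ⟨k'', hk''⟩ := hbasis _ (hunion _ (hsingle a) _ hTℬ)
    have haK : a ∈ Gi k'' := hk'' (Or.inl rfl)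
    have hG0K : Gi 0 ≤ Gi k'' := by
      rw [← hB₀cl]
      exact (Subgroup.closure_le _).mpr fun x hx => hk'' (Or.inr (hB₀T hx))
    refine ⟨k'', fun hmem => hunb 0 ?_⟩
    apply hsubset _ _ _ (hmul _ (hinv _ (hsingle a)) _ hmem)
    intro g hg
    obtain ⟨l, hlT, hlprod⟩ := hmemT g hg
    have hagA : a * g ∈ A := by rw [← hlprod]; exact key l hlT
    have hag' : a * g ∈ Gi k'' := mul_mem haK (hG0K hg)
    refine ⟨a⁻¹, ?_, a * g, ⟨hagA, hag'⟩, by group⟩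
    rw [Set.mem_inv]
    simp

lemma exists_upper_subgroup
    (hsingle : ∀ g : G, {g} ∈ ℬ)
    (hsubset : ∀ S T : Set G, S ⊆ T → T ∈ ℬ → S ∈ ℬ)
    (hunion : ∀ S ∈ ℬ, ∀ T ∈ ℬ, S ∪ T ∈ ℬ)
    (Gi : ℕ → Subgroup G)
    (hgen : ∀ i, ∃ B ∈ ℬ, Subgroup.closure B = Gi i)
    (hbasis : ∀ B ∈ ℬ, ∃ i, B ⊆ (Gi i : Set G))
    (s : Finset ℕ) : ∃ K, ∀ i ∈ s, Gi i ≤ Gi K := by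
  classical
  choose Bg hBℬ hBcl using hgen
  have hU : (⋃ i ∈ s, Bg i) ∈ ℬ := by
    induction s using Finset.induction with
    | empty => simpa using born_empty hsingle hsubset
    | insert _ _ h ih =>
      rw [Finset.set_biUnion_insert]
      exact hunion _ (hBℬ _) _ ih
  obtain ⟨K, hK⟩ := hbasis _ hU
  refine ⟨K, fun i hi => ?_⟩
  rw [← hBcl i]
  exact (Subgroup.closure_le _).mpr fun x hx => hK (Set.mem_biUnion hi hx)

-- induced bornology lemmas
lemma image_preimage_val (H : Subgroup G) (A : Set G) :
    (Subtype.val '' (Subtype.val ⁻¹' A : Set H) : Set G) = A ∩ (H : Set G) := by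
  ext x
  constructor
  · rintro ⟨⟨y, hy⟩, hmem, rfl⟩
    exact ⟨hmem, hy⟩
  · rintro ⟨hxA, hxH⟩
    exact ⟨⟨x, hxH⟩, hxA, rfl⟩

lemma cc_induced
    (hsubset : ∀ S T : Set G, S ⊆ T → T ∈ ℬ → S ∈ ℬ)
    (H : Subgroup G) {A : Set G} (hcc : CoarselyClopen ℬ A) :
    CoarselyClopen (inducedBornology ℬ H) (Subtype.val ⁻¹' A : Set H) := by
  intro S hS
  have hS' : (Subtype.val '' S : Set G) ∈ ℬ := hS
  show (Subtype.val '' _ : Set G) ∈ ℬ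
  apply hsubset _ _ _ (hcc _ hS')
  rintro x ⟨y, ⟨hy1, hy2⟩, rfl⟩
  obtain ⟨p, hp, q, hq, hpq⟩ := hy1
  obtain ⟨p', hp', q', hq', hpq'⟩ := hy2
  constructor
  · refine ⟨(p : G), hp, (q : G), ⟨q, hq, rfl⟩, ?_⟩
    rw [← hpq]; rfl
  · refine ⟨(p' : G), hp', (q' : G), ⟨q', hq', rfl⟩, ?_⟩
    rw [← hpq']; rfl

end Aux3

theorem ends_le_of_basis_subgroups_ends_le {G : Type*} [Group G] (ℬ : Set (Set G))
    (hsingle : ∀ g : G, {g} ∈ ℬ)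
    (hsubset : ∀ S T : Set G, S ⊆ T → T ∈ ℬ → S ∈ ℬ)
    (hunion : ∀ S ∈ ℬ, ∀ T ∈ ℬ, S ∪ T ∈ ℬ)
    (hmul : ∀ S ∈ ℬ, ∀ T ∈ ℬ, S * T ∈ ℬ)
    (hinv : ∀ S ∈ ℬ, S⁻¹ ∈ ℬ)
    (Gi : ℕ → Subgroup G)
    (hunb : ∀ i, ((Gi i : Subgroup G) : Set G) ∉ ℬ)
    (hgen : ∀ i, ∃ B ∈ ℬ, Subgroup.closure B = Gi i)
    (hbasis : ∀ B ∈ ℬ, ∃ i, B ⊆ (Gi i : Set G))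
    (m : ℕ)
    (hends : ∀ i, (Ends (inducedBornology ℬ (Gi i))).encard ≤ (m : ℕ∞)) :
    (Ends ℬ).encard ≤ (m : ℕ∞) := by
  classical
  by_contra hcon
  -- extract m+1 distinct ends of G
  have hm1 : ((m + 1 : ℕ) : ℕ∞) ≤ (Ends ℬ).encard := by
    push_cast
    exact (ENat.add_one_le_iff (by simp)).mpr (lt_of_not_ge hcon)
  obtain ⟨t, hts, htc⟩ := Set.exists_subset_encard_eq hm1
  have htfin : t.Finite := Set.finite_of_encard_eq_coe htc
  have hcard : htfin.toFinset.card = m + 1 := by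
    have := htfin.encard_eq_coe_toFinset_card
    rw [htc] at this
    exact_mod_cast this.symm
  let e := Finset.equivFinOfCardEq hcard
  let E : Fin (m + 1) → Set (Set G) := fun j => ((e.symm j : htfin.toFinset) : Set (Set G))
  have hEend : ∀ j, IsEnd ℬ (E j) := fun j =>
    hts (htfin.mem_toFinset.mp (e.symm j).2)
  have hEinj : Function.Injective E := fun a b h => by
    have : e.symm a = e.symm b := Subtype.ext h
    simpa using congrArg e this
  -- separating sets
  have hsep : ∀ j k : Fin (m + 1), j < k → ∃ A, A ∈ E j ∧ Aᶜ ∈ E k := fun j k hjk =>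
    sep_ends hsubset hunion (hEend j) (hEend k) (fun h => (ne_of_lt hjk) (hEinj h))
  choose P hP1 hP2 using hsep
  let Q : Fin (m + 1) → Fin (m + 1) → Set G := fun j k =>
    if h : j < k then P j k h else if h' : k < j then (P k j h')ᶜ else ∅
  have hQmem : ∀ j k, j ≠ k → Q j k ∈ E j := by
    intro j k hne
    rcases lt_trichotomy j k with h | h | h
    · simp only [Q, dif_pos h]; exact hP1 j k h
    · exact absurd h hne
    · simp only [Q, dif_neg (asymm h), dif_pos h]; exact hP2 k j h
  have hQdisj : ∀ j k, j ≠ k → Q j k ∩ Q k j = ∅ := by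
    intro j k hne
    rcases lt_trichotomy j k with h | h | h
    · simp only [Q, dif_pos h, dif_neg (asymm h)]
      exact inter_compl_self _
    · exact absurd h hne
    · simp only [Q, dif_pos h, dif_neg (asymm h)]
      exact compl_inter_self _
  -- the m+1 pairwise disjoint sets
  let FA : Fin (m + 1) → Finset (Set G) := fun j => (Finset.univ.erase j).image (Q j)
  let A : Fin (m + 1) → Set G := fun j => ⋂₀ ((FA j : Set (Set G)))
  have hFAmem : ∀ j X, X ∈ FA j → ∃ k, k ≠ j ∧ X = Q j k := by
    intro j X hX
    obtain ⟨k, hk, rfl⟩ := Finset.mem_image.mp hX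
    exact ⟨k, (Finset.mem_erase.mp hk).1, rfl⟩
  have hFAsub : ∀ j, (FA j : Set (Set G)) ⊆ E j := by
    intro j X hX
    obtain ⟨k, hk, rfl⟩ := hFAmem j X (Finset.mem_coe.mp hX)
    exact hQmem j k (Ne.symm hk)
  have hAcc : ∀ j, CoarselyClopen ℬ (A j) := by
    intro j
    apply cc_sInterFinset hsingle hsubset hunion
    intro X hX
    exact ((hEend j).1.1 X (hFAsub j (Finset.mem_coe.mpr hX))).2
  have hAunb : ∀ j, A j ∉ ℬ := by
    intro j
    rcases Finset.eq_empty_or_nonempty (FA j) with h | h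
    · intro hmem
      apply hunb 0
      apply hsubset _ _ (subset_univ _)
      have : A j = univ := by simp [A, h]
      rwa [this] at hmem
    · exact (hEend j).1.2 (FA j) h (hFAsub j)
  have hAdisj : ∀ j k, j ≠ k → A j ∩ A k = ∅ := by
    intro j k hne
    have h1 : A j ⊆ Q j k := by
      apply sInter_subset_of_mem
      exact Finset.mem_coe.mpr (Finset.mem_image_of_mem _ (Finset.mem_erase.mpr ⟨Ne.symm hne, Finset.mem_univ _⟩))
    have h2 : A k ⊆ Q k j := by
      apply sInter_subset_of_mem
      exact Finset.mem_coe.mpr (Finset.mem_image_of_mem _ (Finset.mem_erase.mpr ⟨hne, Finset.mem_univ _⟩))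
    rw [← subset_empty_iff, ← hQdisj j k hne]
    exact inter_subset_inter h1 h2
  -- find one subgroup where all traces are unbounded
  have hkj : ∀ j, ∃ k, A j ∩ (Gi k : Set G) ∉ ℬ := fun j =>
    exists_trace_unbounded hsingle hsubset hunion hmul hinv Gi hunb hgen hbasis
      (hAcc j) (hAunb j)
  choose kf hkf using hkj
  obtain ⟨K, hK⟩ := exists_upper_subgroup hsingle hsubset hunion Gi hgen hbasis
    (Finset.univ.image kf)
  have hAK : ∀ j, A j ∩ (Gi K : Set G) ∉ ℬ := by
    intro j hmem
    apply hkf j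
    apply hsubset _ _ _ hmem
    apply inter_subset_inter_right
    exact SetLike.coe_subset_coe.mpr (hK (kf j) (Finset.mem_image_of_mem _ (Finset.mem_univ _)))
  -- move to the subgroup Gi K
  set H : Subgroup G := Gi K with hHdef
  set ℬ' : Set (Set H) := inducedBornology ℬ H with hB'def
  let Ab : Fin (m + 1) → Set H := fun j => (Subtype.val ⁻¹' A j : Set H)
  have hAbunb : ∀ j, Ab j ∉ ℬ' := by
    intro j h
    apply hAK j
    have : (Subtype.val '' (Ab j) : Set G) ∈ ℬ := h
    rwa [image_preimage_val] at this
  have hAbcc : ∀ j, CoarselyClopen ℬ' (Ab j) := fun j => cc_induced hsubset H (hAcc j)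
  have hemp : (∅ : Set H) ∈ ℬ' := by
    show (Subtype.val '' (∅ : Set H) : Set G) ∈ ℬ
    rw [image_empty]
    exact born_empty hsingle hsubset
  have hgood : ∀ j, IsGoodFamily ℬ' {Ab j} := by
    intro j
    constructor
    · intro X hX
      rw [mem_singleton_iff] at hX; subst hX
      exact ⟨hAbunb j, hAbcc j⟩
    · intro F hFne hFsub
      have : ⋂₀ (F : Set (Set H)) = Ab j := by
        apply subset_antisymm
        · obtain ⟨X, hX⟩ := hFne
          have := hFsub (Finset.mem_coe.mpr hX)
          rw [mem_singleton_iff] at this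
          exact this ▸ sInter_subset_of_mem (Finset.mem_coe.mpr hX)
        · intro x hx Y hY
          have := hFsub hY
          rw [mem_singleton_iff] at this
          exact this ▸ hx
      rw [this]
      exact hAbunb j
  have hEb : ∀ j, ∃ E', IsEnd ℬ' E' ∧ ({Ab j} : Set (Set H)) ⊆ E' := fun j =>
    exists_end_extending _ (hgood j)
  choose Eb hEbEnd hEbsub using hEb
  have hEbinj : Function.Injective Eb := by
    intro j k h
    by_contra hne
    have hj : Ab j ∈ Eb j := hEbsub j rfl
    have hk : Ab k ∈ Eb j := h ▸ hEbsub k rfl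
    have hAbne : Ab j ≠ Ab k := by
      intro he
      apply hAbunb j
      have hsubempty : Ab j = (∅ : Set H) := by
        apply subset_antisymm _ (empty_subset _)
        intro x hx
        have hxk : x ∈ Ab k := by rw [← he]; exact hx
        have hmem2 : (x : G) ∈ A j ∩ A k := ⟨hx, hxk⟩
        rw [hAdisj j k hne] at hmem2
        exact hmem2
      rw [hsubempty]
      exact hemp
    have hFs : ((({Ab j, Ab k} : Finset (Set H)) : Set (Set H))) ⊆ Eb j := by
      intro X hX
      rcases Finset.mem_insert.mp (Finset.mem_coe.mp hX) with h' | h'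
      · rwa [h']
      · rw [Finset.mem_singleton] at h'
        rwa [h']
    have hFne : ({Ab j, Ab k} : Finset (Set H)).Nonempty := ⟨Ab j, Finset.mem_insert_self _ _⟩
    have hsint : ⋂₀ ((({Ab j, Ab k} : Finset (Set H)) : Set (Set H))) = (∅ : Set H) := by
      rw [Finset.coe_insert, Finset.coe_singleton, sInter_insert, sInter_singleton]
      apply subset_antisymm _ (empty_subset _)
      rintro x ⟨hx1, hx2⟩
      have : (x : G) ∈ A j ∩ A k := ⟨hx1, hx2⟩
      rw [hAdisj j k hne] at this
      exact this
    have := (hEbEnd j).1.2 ({Ab j, Ab k} : Finset (Set H)) hFne hFs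
    rw [hsint] at this
    exact this hemp
  -- count the ends of Gi K
  have hsubEnds : ((Finset.univ.image Eb : Finset (Set (Set H))) : Set (Set (Set H))) ⊆
      Ends ℬ' := by
    intro X hX
    obtain ⟨j, _, rfl⟩ := Finset.mem_image.mp (Finset.mem_coe.mp hX)
    exact hEbEnd j
  have hcount : ((m + 1 : ℕ) : ℕ∞) ≤ (Ends ℬ').encard := by
    have h1 : (Finset.univ.image Eb).card = m + 1 := by
      rw [Finset.card_image_of_injective _ hEbinj, Finset.card_univ, Fintype.card_fin]
    calc ((m + 1 : ℕ) : ℕ∞) = ((Finset.univ.image Eb : Finset (Set (Set H))) : Set (Set (Set H))).encard := by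
          rw [Set.encard_coe_eq_coe_finsetCard, h1]
      _ ≤ (Ends ℬ').encard := Set.encard_le_encard hsubEnds
  have := hcount.trans (hends K)
  rw [Nat.cast_le] at this
  omega
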